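/- Let W ∈ ℝ^{m×n} and X ∈ ℝ^{n×k} with rank(X) = k ≥ r and σ_r(WX) ≠ σ_{r+1}(WX). Let W₀ = U_rU_rᵀW with U_r the first r left singular vectors of WX, and let W_μ be the solution of the regularized problem (first r left singular vectors of W(XXᵀ + μI)^{1/2} projected onto W). Then ‖W₀ − W_μ‖_F ≤ (2‖W‖₂²‖W‖_F (σ₁(X)/σ_k(X) + max(1, μ/(4σ_k(X)²))) / (σ_r(WX)² − σ_{r+1}(WX)²)) · μ. -/

import Mathlib

open Matrix BigOperators

open scoped ComplexOrder in
/-- The positive semidefinite square root of a positive semidefinite matrix, as defined in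
Mathlib of December 2024 (removed since). -/
noncomputable def Matrix.PosSemidef.sqrt {𝕜 : Type*} [RCLike 𝕜] {n : Type*} [Fintype n]
    [DecidableEq n] {A : Matrix n n 𝕜} (hA : A.PosSemidef) : Matrix n n 𝕜 :=
  hA.1.eigenvectorUnitary.1 * diagonal ((↑) ∘ (√·) ∘ hA.1.eigenvalues) *
    (star hA.1.eigenvectorUnitary : Matrix n n 𝕜)

noncomputable def frobNorm {α β : Type*} [Fintype α] [Fintype β]
    (A : Matrix α β ℝ) : ℝ :=
  Real.sqrt (∑ i, ∑ j, (A i j) ^ 2)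

noncomputable def specNorm {α β : Type*} [Fintype α] [Fintype β]
    (A : Matrix α β ℝ) : ℝ :=
  sSup ((fun x : β → ℝ => Real.sqrt (∑ i, (A.mulVec x i) ^ 2)) ''
    {x | ∑ j, (x j) ^ 2 = 1})

namespace Stmt16

variable {α β γ : Type*} [Fintype α] [Fintype β] [Fintype γ]

noncomputable def vsq (v : α → ℝ) : ℝ := ∑ i, v i ^ 2

noncomputable def fsq (A : Matrix α β ℝ) : ℝ := ∑ i, ∑ j, A i j ^ 2

lemma vsq_nonneg (v : α → ℝ) : 0 ≤ vsq v :=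
  Finset.sum_nonneg fun _ _ => sq_nonneg _

lemma fsq_nonneg (A : Matrix α β ℝ) : 0 ≤ fsq A :=
  Finset.sum_nonneg fun _ _ => Finset.sum_nonneg fun _ _ => sq_nonneg _

lemma frobNorm_eq (A : Matrix α β ℝ) : frobNorm A = Real.sqrt (fsq A) := rfl

lemma frobNorm_nonneg (A : Matrix α β ℝ) : 0 ≤ frobNorm A := Real.sqrt_nonneg _

lemma frobNorm_sq (A : Matrix α β ℝ) : frobNorm A ^ 2 = fsq A := by
  rw [frobNorm_eq, Real.sq_sqrt (fsq_nonneg A)]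

lemma vsq_eq_dot (v : α → ℝ) : vsq v = v ⬝ᵥ v := by
  simp [vsq, dotProduct, pow_two]

lemma specNorm_nonneg (A : Matrix α β ℝ) : 0 ≤ specNorm A :=
  Real.sSup_nonneg (by rintro y ⟨x, _, rfl⟩; exact Real.sqrt_nonneg _)

lemma unit_mulVec_le_frob (A : Matrix α β ℝ) (x : β → ℝ) (hx : vsq x = 1) :
    Real.sqrt (vsq (A.mulVec x)) ≤ frobNorm A := by
  rw [frobNorm_eq]
  apply Real.sqrt_le_sqrt
  calc vsq (A.mulVec x) ≤ ∑ i, (∑ j, A i j ^ 2) * (∑ j, x j ^ 2) := by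
        apply Finset.sum_le_sum; intro i _
        exact Finset.sum_mul_sq_le_sq_mul_sq _ _ _
    _ = fsq A := by
        simp only [fsq]
        rw [show (∑ j, x j ^ 2) = 1 from hx]
        simp

lemma unit_mulVec_le_spec (A : Matrix α β ℝ) (x : β → ℝ) (hx : vsq x = 1) :
    Real.sqrt (vsq (A.mulVec x)) ≤ specNorm A := by
  apply le_csSup
  · refine ⟨frobNorm A, ?_⟩
    rintro y ⟨z, hz, rfl⟩
    exact unit_mulVec_le_frob A z hz
  · exact ⟨x, hx, rfl⟩

lemma vsq_smul (c : ℝ) (v : α → ℝ) : vsq (c • v) = c ^ 2 * vsq v := by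
  simp [vsq, Finset.mul_sum, mul_pow]

lemma vsq_mulVec_le (A : Matrix α β ℝ) (x : β → ℝ) :
    vsq (A.mulVec x) ≤ specNorm A ^ 2 * vsq x := by
  rcases eq_or_lt_of_le (vsq_nonneg x) with h0 | hpos
  · have hx : x = 0 := by
      funext j
      have h := (Finset.sum_eq_zero_iff_of_nonneg
        (fun i _ => sq_nonneg (x i))).mp h0.symm j (Finset.mem_univ j)
      exact sq_eq_zero_iff.mp h
    subst hx
    simp [Matrix.mulVec_zero, vsq]
  · set t := Real.sqrt (vsq x) with ht
    have htpos : 0 < t := Real.sqrt_pos.mpr hpos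
    have ht2 : t ^ 2 = vsq x := Real.sq_sqrt (le_of_lt hpos)
    have hunit : vsq (t⁻¹ • x) = 1 := by
      rw [vsq_smul, ← ht2]; field_simp
    have h1 := unit_mulVec_le_spec A _ hunit
    have h2 : A.mulVec (t⁻¹ • x) = t⁻¹ • A.mulVec x := by
      rw [Matrix.mulVec_smul]
    rw [h2, vsq_smul] at h1
    have h3 : t⁻¹ ^ 2 * vsq (A.mulVec x) ≤ specNorm A ^ 2 := by
      have h4 : (0:ℝ) ≤ t⁻¹ ^ 2 * vsq (A.mulVec x) :=
        mul_nonneg (sq_nonneg _) (vsq_nonneg _)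
      calc t⁻¹ ^ 2 * vsq (A.mulVec x)
          = Real.sqrt (t⁻¹ ^ 2 * vsq (A.mulVec x)) ^ 2 := (Real.sq_sqrt h4).symm
        _ ≤ specNorm A ^ 2 := by
            apply pow_le_pow_left₀ (Real.sqrt_nonneg _) h1
    calc vsq (A.mulVec x) = (t⁻¹ ^ 2 * vsq (A.mulVec x)) * t ^ 2 := by
          field_simp
      _ ≤ specNorm A ^ 2 * t ^ 2 := by
          apply mul_le_mul_of_nonneg_right h3 (sq_nonneg t)
      _ = specNorm A ^ 2 * vsq x := by rw [ht2]

lemma dot_le_sqrt (u v : α → ℝ) :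
    u ⬝ᵥ v ≤ Real.sqrt (vsq u) * Real.sqrt (vsq v) := by
  have h1 : (u ⬝ᵥ v) ^ 2 ≤ vsq u * vsq v := by
    simpa [dotProduct, vsq] using Finset.sum_mul_sq_le_sq_mul_sq Finset.univ u v
  calc u ⬝ᵥ v ≤ |u ⬝ᵥ v| := le_abs_self _
    _ = Real.sqrt ((u ⬝ᵥ v) ^ 2) := (Real.sqrt_sq_eq_abs _).symm
    _ ≤ Real.sqrt (vsq u * vsq v) := Real.sqrt_le_sqrt h1
    _ = Real.sqrt (vsq u) * Real.sqrt (vsq v) :=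
        Real.sqrt_mul (vsq_nonneg u) _

lemma specNorm_transpose_le (A : Matrix α β ℝ) : specNorm Aᵀ ≤ specNorm A := by
  apply Real.sSup_le _ (specNorm_nonneg A)
  rintro y ⟨x, hx, rfl⟩
  show Real.sqrt (vsq (Aᵀ.mulVec x)) ≤ specNorm A
  set w := Aᵀ.mulVec x with hw
  set s := Real.sqrt (vsq w) with hs
  have hs0 : 0 ≤ s := Real.sqrt_nonneg _
  have hs2 : s ^ 2 = vsq w := Real.sq_sqrt (vsq_nonneg w)
  have key : s ^ 2 ≤ specNorm A * s := by
    have h1 : vsq w = x ⬝ᵥ A.mulVec w := by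
      have : x ⬝ᵥ A.mulVec w = w ⬝ᵥ w := by
        rw [Matrix.dotProduct_mulVec, ← Matrix.mulVec_transpose, ← hw]
      rw [this, vsq_eq_dot]
    have h2 : x ⬝ᵥ A.mulVec w ≤ Real.sqrt (vsq x) * Real.sqrt (vsq (A.mulVec w)) :=
      dot_le_sqrt _ _
    have h3 : Real.sqrt (vsq x) = 1 := by
      rw [show vsq x = 1 from hx, Real.sqrt_one]
    have h4 : Real.sqrt (vsq (A.mulVec w)) ≤ specNorm A * s := by
      calc Real.sqrt (vsq (A.mulVec w)) ≤ Real.sqrt (specNorm A ^ 2 * vsq w) :=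
            Real.sqrt_le_sqrt (vsq_mulVec_le A w)
        _ = specNorm A * s := by
            rw [← hs2, ← mul_pow, Real.sqrt_sq (mul_nonneg (specNorm_nonneg A) hs0)]
    calc s ^ 2 = vsq w := hs2
      _ = x ⬝ᵥ A.mulVec w := h1
      _ ≤ Real.sqrt (vsq x) * Real.sqrt (vsq (A.mulVec w)) := h2
      _ = Real.sqrt (vsq (A.mulVec w)) := by rw [h3, one_mul]
      _ ≤ specNorm A * s := h4
  rcases eq_or_lt_of_le hs0 with h | h
  · rw [← h]; exact specNorm_nonneg A
  · have := key
    rw [pow_two] at this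
    exact le_of_mul_le_mul_right (by linarith) h


-- rows of a product
lemma fsq_rows (A : Matrix α β ℝ) : fsq A = ∑ i, vsq (A i) := rfl

lemma fsq_cols (A : Matrix α β ℝ) : fsq A = ∑ j, vsq (fun i => A i j) := by
  simp only [fsq, vsq]
  exact Finset.sum_comm

lemma fsq_mul_le (M : Matrix α β ℝ) (W : Matrix β γ ℝ) :
    fsq (M * W) ≤ specNorm W ^ 2 * fsq M := by
  have hrow : ∀ i, (M * W) i = Wᵀ.mulVec (M i) := by
    intro i; funext j
    simp [Matrix.mul_apply, Matrix.mulVec, dotProduct, Matrix.transpose_apply,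
      mul_comm]
  calc fsq (M * W) = ∑ i, vsq (Wᵀ.mulVec (M i)) := by
        rw [fsq_rows]; exact Finset.sum_congr rfl fun i _ => by rw [hrow i]
    _ ≤ ∑ i, specNorm Wᵀ ^ 2 * vsq (M i) :=
        Finset.sum_le_sum fun i _ => vsq_mulVec_le Wᵀ (M i)
    _ ≤ ∑ i, specNorm W ^ 2 * vsq (M i) := by
        apply Finset.sum_le_sum; intro i _
        apply mul_le_mul_of_nonneg_right _ (vsq_nonneg _)
        exact pow_le_pow_left₀ (specNorm_nonneg _) (specNorm_transpose_le W) 2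
    _ = specNorm W ^ 2 * fsq M := by rw [← Finset.mul_sum, fsq_rows]

lemma fsq_eq_trace (A : Matrix α β ℝ) : fsq A = (Aᵀ * A).trace := by
  simp only [Matrix.trace, Matrix.diag, Matrix.mul_apply, Matrix.transpose_apply,
    fsq, pow_two]
  exact Finset.sum_comm

lemma fsq_conj {p q : Type*} [Fintype p] [Fintype q] [DecidableEq p] [DecidableEq q]
    (U : Matrix p p ℝ) (V : Matrix q q ℝ) (hU : U * Uᵀ = 1) (hV : Vᵀ * V = 1)
    (B : Matrix p q ℝ) : fsq (Uᵀ * B * V) = fsq B := by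
  rw [fsq_eq_trace, fsq_eq_trace]
  have h1 : (Uᵀ * B * V)ᵀ * (Uᵀ * B * V) = Vᵀ * (Bᵀ * B) * V := by
    have : (Uᵀ * B * V)ᵀ = Vᵀ * Bᵀ * U := by
      rw [Matrix.transpose_mul, Matrix.transpose_mul, Matrix.transpose_transpose,
        Matrix.mul_assoc]
    rw [this]
    calc Vᵀ * Bᵀ * U * (Uᵀ * B * V) = Vᵀ * Bᵀ * (U * Uᵀ) * B * V := by
          simp only [Matrix.mul_assoc]
      _ = Vᵀ * (Bᵀ * B) * V := by rw [hU, Matrix.mul_one]; simp only [Matrix.mul_assoc]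
  rw [h1, Matrix.trace_mul_comm, ← Matrix.mul_assoc, mul_eq_one_comm.mp hV,
    Matrix.one_mul]

lemma fsq_smul (c : ℝ) (A : Matrix α β ℝ) : fsq (c • A) = c ^ 2 * fsq A := by
  simp [fsq, Finset.mul_sum, mul_pow]

lemma vsq_mulVec_orth {p : Type*} [Fintype p] [DecidableEq p] (U : Matrix p p ℝ)
    (hU : Uᵀ * U = 1) (v : p → ℝ) : vsq (U.mulVec v) = vsq v := by
  rw [vsq_eq_dot, vsq_eq_dot]
  rw [Matrix.dotProduct_mulVec, Matrix.vecMul_mulVec, hU, Matrix.vecMul_one]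

lemma qf_spectral {p : Type*} [Fintype p] [DecidableEq p]
    (U : Matrix p p ℝ) (d : p → ℝ) (x : p → ℝ) :
    x ⬝ᵥ (U * Matrix.diagonal d * Uᵀ).mulVec x
      = ∑ i, d i * (Uᵀ.mulVec x i) ^ 2 := by
  set w := Uᵀ.mulVec x with hw
  have h1 : (U * Matrix.diagonal d * Uᵀ).mulVec x
      = (U * Matrix.diagonal d).mulVec w := by
    rw [hw, Matrix.mulVec_mulVec]
  rw [h1, Matrix.dotProduct_mulVec]
  have h2 : x ᵥ* (U * Matrix.diagonal d) = fun i => w i * d i := by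
    rw [← Matrix.vecMul_vecMul]
    have : x ᵥ* U = w := by rw [hw, Matrix.mulVec_transpose]
    rw [this]
    funext i
    exact Matrix.vecMul_diagonal w d i
  rw [h2]
  simp only [dotProduct]
  apply Finset.sum_congr rfl
  intro i _
  ring

lemma sum_extend {m r : ℕ} (hrm : r ≤ m) (g : Fin r → ℝ) :
    (∑ j : Fin m, if h : (j : ℕ) < r then g ⟨j, h⟩ else 0) = ∑ j : Fin r, g j := by
  set g' : ℕ → ℝ := fun j => if h : j < r then g ⟨j, h⟩ else 0 with hg'
  have h1 : (∑ j : Fin m, if h : (j : ℕ) < r then g ⟨j, h⟩ else 0)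
      = ∑ j ∈ Finset.range m, g' j := Fin.sum_univ_eq_sum_range g' m
  have h2 : (∑ j : Fin r, g j) = ∑ j ∈ Finset.range r, g' j := by
    rw [← Fin.sum_univ_eq_sum_range g' r]
    apply Finset.sum_congr rfl
    intro j _
    simp [hg', j.isLt]
  rw [h1, h2]
  symm
  apply Finset.sum_subset (Finset.range_subset_range.mpr hrm)
  intro x _ hx
  simp only [Finset.mem_range, not_lt] at hx
  simp [hg', Nat.not_lt.mpr hx]

lemma exists_ker {p q : ℕ} (h : p < q) (B : Matrix (Fin p) (Fin q) ℝ) :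
    ∃ c : Fin q → ℝ, c ≠ 0 ∧ B.mulVec c = 0 := by
  by_contra hc
  push_neg at hc
  have hinj : Function.Injective B.mulVecLin := by
    rw [← LinearMap.ker_eq_bot, Submodule.eq_bot_iff]
    intro c hcker
    by_contra hcne
    exact hc c hcne hcker
  have hle := LinearMap.finrank_le_finrank_of_injective hinj
  simp only [Module.finrank_fintype_fun_eq_card, Fintype.card_fin] at hle
  omega

lemma frob_triangle_sub (A B : Matrix α β ℝ) :
    frobNorm (A - B) ≤ frobNorm A + frobNorm B := by
  have key : ∀ C : Matrix α β ℝ,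
      frobNorm C = ‖(WithLp.equiv 2 ((α × β) → ℝ)).symm (fun p => C p.1 p.2)‖ := by
    intro C
    rw [EuclideanSpace.norm_eq]
    show Real.sqrt (∑ i, ∑ j, C i j ^ 2) = _
    congr 1
    calc (∑ i, ∑ j, C i j ^ 2) = ∑ p : α × β, (C p.1 p.2) ^ 2 :=
          (Fintype.sum_prod_type (f := fun p : α × β => (C p.1 p.2) ^ 2)).symm
      _ = _ := by
          apply Finset.sum_congr rfl
          intro p _
          rw [Real.norm_eq_abs, sq_abs]
          rfl
  rw [key, key, key]
  have : (WithLp.equiv 2 ((α × β) → ℝ)).symm (fun p => (A - B) p.1 p.2)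
      = (WithLp.equiv 2 ((α × β) → ℝ)).symm (fun p => A p.1 p.2)
        - (WithLp.equiv 2 ((α × β) → ℝ)).symm (fun p => B p.1 p.2) := rfl
  rw [this]
  exact norm_sub_le _ _


lemma weyl_key {m : ℕ} (A B U V : Matrix (Fin m) (Fin m) ℝ)
    (a b : Fin m → ℝ) (hU : Uᵀ * U = 1) (hV : Vᵀ * V = 1)
    (hA : A = U * Matrix.diagonal a * Uᵀ) (hB : B = V * Matrix.diagonal b * Vᵀ)
    (hamono : Antitone a) (hbmono : Antitone b)
    (p : ℕ) (hpm : p < m) (ε : ℝ)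
    (hqf : ∀ x : Fin m → ℝ, x ⬝ᵥ B.mulVec x ≤ x ⬝ᵥ A.mulVec x + ε * vsq x) :
    b ⟨p, hpm⟩ ≤ a ⟨p, hpm⟩ + ε := by
  have hp1m : p + 1 ≤ m := hpm
  set Z : Matrix (Fin m) (Fin m) ℝ := Uᵀ * V with hZ
  obtain ⟨c, hc0, hcker⟩ := exists_ker (Nat.lt_succ_self p)
    (fun i j => Z (Fin.castLE (le_of_lt hpm) i) (Fin.castLE hp1m j))
  set c' : Fin m → ℝ := fun j => if h : (j : ℕ) < p + 1 then c ⟨j, h⟩ else 0 with hc'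
  set x : Fin m → ℝ := V.mulVec c' with hx
  have hvc : vsq c' = vsq c := by
    show (∑ j : Fin m, c' j ^ 2) = ∑ j : Fin (p + 1), c j ^ 2
    have he : ∀ j : Fin m, c' j ^ 2
        = if h : (j : ℕ) < p + 1 then c ⟨j, h⟩ ^ 2 else 0 := by
      intro j; by_cases h : (j : ℕ) < p + 1 <;> simp only [hc', h, dite_true, dite_false, not_false_eq_true, dif_pos, dif_neg] <;> simp
    rw [Finset.sum_congr rfl fun j _ => he j]
    exact sum_extend hp1m (fun j => c j ^ 2)
  have hvcpos : 0 < vsq c := by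
    obtain ⟨i, hi⟩ := Function.ne_iff.mp hc0
    have h1 : 0 < c i ^ 2 := lt_of_le_of_ne (sq_nonneg _) (Ne.symm (pow_ne_zero 2 hi))
    exact lt_of_lt_of_le h1
      (Finset.single_le_sum (fun i _ => sq_nonneg (c i)) (Finset.mem_univ i))
  have hvx : vsq x = vsq c' := vsq_mulVec_orth V hV c'
  have hVtx : Vᵀ.mulVec x = c' := by
    rw [hx, Matrix.mulVec_mulVec, hV, Matrix.one_mulVec]
  have hyZ : Uᵀ.mulVec x = Z.mulVec c' := by
    rw [hx, Matrix.mulVec_mulVec, hZ]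
  have hyvan : ∀ i : Fin m, (i : ℕ) < p → Z.mulVec c' i = 0 := by
    intro i hi
    have h1 : Z.mulVec c' i = ∑ j : Fin (p + 1), Z i (Fin.castLE hp1m j) * c j := by
      show (∑ j, Z i j * c' j) = _
      have he : ∀ j : Fin m, Z i j * c' j
          = if h : (j : ℕ) < p + 1
            then Z i (Fin.castLE hp1m ⟨(j : ℕ), h⟩) * c ⟨(j : ℕ), h⟩ else 0 := by
        intro j
        by_cases h : (j : ℕ) < p + 1
        · simp only [hc', dif_pos h]
          rfl
        · simp [hc', h]; intro h'; exact absurd h' (by omega)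
      rw [Finset.sum_congr rfl fun j _ => he j]
      exact sum_extend hp1m (fun j => Z i (Fin.castLE hp1m j) * c j)
    have h2 := congrFun hcker ⟨(i : ℕ), hi⟩
    have h3 : (Matrix.mulVec (fun i' j => Z (Fin.castLE (le_of_lt hpm) i')
        (Fin.castLE hp1m j)) c) ⟨(i : ℕ), hi⟩
        = ∑ j : Fin (p + 1), Z i (Fin.castLE hp1m j) * c j := rfl
    rw [h1, ← h3, h2]
    rfl
  have hqB : x ⬝ᵥ B.mulVec x = ∑ j, b j * c' j ^ 2 := by
    rw [hB, qf_spectral, hVtx]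
  have hqA : x ⬝ᵥ A.mulVec x = ∑ i, a i * (Z.mulVec c' i) ^ 2 := by
    rw [hA, qf_spectral]
    exact Finset.sum_congr rfl fun i _ => by rw [hyZ]
  have hlow : b ⟨p, hpm⟩ * vsq c' ≤ ∑ j, b j * c' j ^ 2 := by
    show b ⟨p, hpm⟩ * (∑ j, c' j ^ 2) ≤ _
    rw [Finset.mul_sum]
    apply Finset.sum_le_sum
    intro j _
    by_cases h : (j : ℕ) < p + 1
    · exact mul_le_mul_of_nonneg_right
        (hbmono (show j ≤ ⟨p, hpm⟩ by rw [Fin.le_def]; simpa using Nat.lt_succ_iff.mp h))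
        (sq_nonneg _)
    · have hz : c' j = 0 := by simp [hc', h]; intro h'; exact absurd h' (by omega)
      rw [hz]; simp
  have hup : ∑ i, a i * (Z.mulVec c' i) ^ 2 ≤ a ⟨p, hpm⟩ * vsq (Z.mulVec c') := by
    show _ ≤ a ⟨p, hpm⟩ * (∑ i, (Z.mulVec c' i) ^ 2)
    rw [Finset.mul_sum]
    apply Finset.sum_le_sum
    intro i _
    by_cases h : (i : ℕ) < p
    · rw [hyvan i h]; simp
    · exact mul_le_mul_of_nonneg_right
        (hamono (show (⟨p, hpm⟩ : Fin m) ≤ i by rw [Fin.le_def]; simpa using Nat.not_lt.mp h))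
        (sq_nonneg _)
  have hvy : vsq (Z.mulVec c') = vsq x := by
    rw [← hyZ]
    apply vsq_mulVec_orth
    rw [Matrix.transpose_transpose]
    exact mul_eq_one_comm.mp hU
  have hkey : b ⟨p, hpm⟩ * vsq c ≤ (a ⟨p, hpm⟩ + ε) * vsq c := by
    have hq := hqf x
    rw [hqB, hqA] at hq
    calc b ⟨p, hpm⟩ * vsq c = b ⟨p, hpm⟩ * vsq c' := by rw [hvc]
      _ ≤ ∑ j, b j * c' j ^ 2 := hlow
      _ ≤ ∑ i, a i * (Z.mulVec c' i) ^ 2 + ε * vsq x := hq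
      _ ≤ a ⟨p, hpm⟩ * vsq (Z.mulVec c') + ε * vsq x := by linarith [hup]
      _ = (a ⟨p, hpm⟩ + ε) * vsq c := by rw [hvy, hvx, hvc]; ring
  exact le_of_mul_le_mul_right hkey hvcpos


lemma sx_last_pos {n k : ℕ} (X : Matrix (Fin n) (Fin k) ℝ)
    (hrank : X.rank = k) (Px : Matrix (Fin k) (Fin k) ℝ) (sx : Fin k → ℝ)
    (hPx : Pxᵀ * Px = 1)
    (hspecx : Xᵀ * X = Px * Matrix.diagonal (fun i => (sx i) ^ 2) * Pxᵀ)
    (hposx : ∀ i, 0 ≤ sx i) (hkk : k - 1 < k) :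
    0 < sx ⟨k - 1, hkk⟩ := by
  rcases lt_or_eq_of_le (hposx ⟨k - 1, hkk⟩) with h | h
  · exact h
  exfalso
  set e : Fin k → ℝ := Pi.single ⟨k - 1, hkk⟩ 1 with he
  set v : Fin k → ℝ := Px.mulVec e with hv
  have hPxv : Pxᵀ.mulVec v = e := by
    rw [hv, Matrix.mulVec_mulVec, hPx, Matrix.one_mulVec]
  have hXtXv : (Xᵀ * X).mulVec v = 0 := by
    rw [hspecx, ← Matrix.mulVec_mulVec, ← Matrix.mulVec_mulVec, hPxv]
    have hD : (Matrix.diagonal fun i => sx i ^ 2).mulVec e = 0 := by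
      funext i
      rw [Matrix.mulVec_diagonal]
      rcases eq_or_ne i ⟨k - 1, hkk⟩ with hik | hik
      · subst hik; rw [← h]; simp
      · simp [he, Pi.single_eq_of_ne hik]
    rw [hD, Matrix.mulVec_zero]
  have hXv : X.mulVec v = 0 := by
    have h1 : vsq (X.mulVec v) = 0 := by
      rw [vsq_eq_dot, Matrix.dotProduct_mulVec, Matrix.vecMul_mulVec]
      have h2 : v ᵥ* (Xᵀ * X) = (Xᵀ * X).mulVec v := by
        rw [← Matrix.mulVec_transpose, Matrix.transpose_mul,
          Matrix.transpose_transpose]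
      rw [h2, hXtXv]
      simp
    funext i
    have h3 := (Finset.sum_eq_zero_iff_of_nonneg
      (fun i _ => sq_nonneg (X.mulVec v i))).mp h1 i (Finset.mem_univ i)
    exact sq_eq_zero_iff.mp h3
  have hvne : v ≠ 0 := by
    intro hv0
    have h4 : e = 0 := by rw [← hPxv, hv0, Matrix.mulVec_zero]
    have h5 := congrFun h4 ⟨k - 1, hkk⟩
    simp [he] at h5
  have hker : v ∈ LinearMap.ker X.mulVecLin := by
    rw [LinearMap.mem_ker]
    exact hXv
  have hkerbot : LinearMap.ker X.mulVecLin = ⊥ := by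
    have h6 := LinearMap.finrank_range_add_finrank_ker X.mulVecLin
    have h7 : Module.finrank ℝ (LinearMap.range X.mulVecLin) = k := hrank
    rw [h7, Module.finrank_fintype_fun_eq_card, Fintype.card_fin] at h6
    have h8 : Module.finrank ℝ (LinearMap.ker X.mulVecLin) = 0 := by omega
    exact Submodule.finrank_eq_zero.mp h8
  rw [hkerbot, Submodule.mem_bot] at hker
  exact hvne hker

lemma frob_le_of_fsq_le {A : Matrix α β ℝ} {c : ℝ} (h : fsq A ≤ c ^ 2)
    (hc : 0 ≤ c) : frobNorm A ≤ c := by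
  rw [frobNorm_eq]
  calc Real.sqrt (fsq A) ≤ Real.sqrt (c ^ 2) := Real.sqrt_le_sqrt h
    _ = c := Real.sqrt_sq hc

lemma frob_mono {A : Matrix α β ℝ} {B : Matrix α γ ℝ} (h : fsq A ≤ fsq B) :
    frobNorm A ≤ frobNorm B := by
  rw [frobNorm_eq, frobNorm_eq]
  exact Real.sqrt_le_sqrt h

set_option maxHeartbeats 2000000 in
/-- Core Davis–Kahan-type bound, with abstract symmetric matrices `S`, `T`. -/
lemma core {m n : ℕ} (r : ℕ) (hr1 : 1 ≤ r) (hrm : r < m) (hr1m : r - 1 < m)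
    (μ : ℝ) (hμ : 0 ≤ μ) (W : Matrix (Fin m) (Fin n) ℝ)
    (S T : Matrix (Fin m) (Fin m) ℝ) (hT : T = S + μ • (W * Wᵀ))
    (U0 : Matrix (Fin m) (Fin m) ℝ) (s0 : Fin m → ℝ) (hU0 : U0ᵀ * U0 = 1)
    (hsvd0 : S = U0 * Matrix.diagonal (fun i => (s0 i) ^ 2) * U0ᵀ)
    (hmono0 : Antitone s0) (hpos0 : ∀ i, 0 ≤ s0 i)
    (Uμ : Matrix (Fin m) (Fin m) ℝ) (sμ : Fin m → ℝ) (hUμ : Uμᵀ * Uμ = 1)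
    (hsvdμ : T = Uμ * Matrix.diagonal (fun i => (sμ i) ^ 2) * Uμᵀ)
    (hmonoμ : Antitone sμ) (hposμ : ∀ i, 0 ≤ sμ i)
    (hgap' : s0 ⟨r, hrm⟩ < s0 ⟨r - 1, hr1m⟩)
    (C : ℝ) (hC2 : 2 ≤ C) :
    frobNorm (U0.submatrix id (Fin.castLE hrm.le) *
        (U0.submatrix id (Fin.castLE hrm.le))ᵀ * W -
      Uμ.submatrix id (Fin.castLE hrm.le) *
        (Uμ.submatrix id (Fin.castLE hrm.le))ᵀ * W) ≤
      (2 * specNorm W ^ 2 * frobNorm W * C /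
        (s0 ⟨r - 1, hr1m⟩ ^ 2 - s0 ⟨r, hrm⟩ ^ 2)) * μ := by
  classical
  set Z : Matrix (Fin m) (Fin m) ℝ := U0ᵀ * Uμ with hZ
  set J : Matrix (Fin m) (Fin m) ℝ :=
    Matrix.diagonal (fun i : Fin m => if (i : ℕ) < r then (1 : ℝ) else 0) with hJ
  have hU0' : U0 * U0ᵀ = 1 := mul_eq_one_comm.mp hU0
  have hUμ' : Uμ * Uμᵀ = 1 := mul_eq_one_comm.mp hUμ
  set δ : ℝ := s0 ⟨r - 1, hr1m⟩ ^ 2 - s0 ⟨r, hrm⟩ ^ 2 with hδ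
  have hδpos : 0 < δ := by
    rw [hδ]
    have h0 := hpos0 ⟨r, hrm⟩
    nlinarith
  -- quadratic form identity
  have hdot : ∀ x : Fin m → ℝ,
      x ⬝ᵥ T.mulVec x = x ⬝ᵥ S.mulVec x + μ * vsq (Wᵀ.mulVec x) := by
    intro x
    rw [hT, Matrix.add_mulVec, dotProduct_add]
    congr 1
    rw [Matrix.smul_mulVec, dotProduct_smul]
    rw [← Matrix.mulVec_mulVec, Matrix.dotProduct_mulVec, ← Matrix.mulVec_transpose,
      ← vsq_eq_dot]
    simp [smul_eq_mul]
  have hqf1 : ∀ x : Fin m → ℝ,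
      x ⬝ᵥ T.mulVec x ≤ x ⬝ᵥ S.mulVec x + (μ * specNorm W ^ 2) * vsq x := by
    intro x
    rw [hdot x]
    have hb := vsq_mulVec_le Wᵀ x
    have h1 : specNorm Wᵀ ^ 2 ≤ specNorm W ^ 2 :=
      pow_le_pow_left₀ (specNorm_nonneg _) (specNorm_transpose_le W) 2
    have h2' : μ * vsq (Wᵀ.mulVec x) ≤ μ * (specNorm W ^ 2 * vsq x) :=
      mul_le_mul_of_nonneg_left
        (le_trans hb (mul_le_mul_of_nonneg_right h1 (vsq_nonneg x))) hμ
    linarith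
  have hqf2 : ∀ x : Fin m → ℝ,
      x ⬝ᵥ S.mulVec x ≤ x ⬝ᵥ T.mulVec x + (0 : ℝ) * vsq x := by
    intro x
    rw [hdot x]
    have := mul_nonneg hμ (vsq_nonneg (Wᵀ.mulVec x))
    linarith
  have lam_mono : Antitone (fun i : Fin m => s0 i ^ 2) := fun i j hij =>
    pow_le_pow_left₀ (hpos0 j) (hmono0 hij) 2
  have nu_mono : Antitone (fun i : Fin m => sμ i ^ 2) := fun i j hij =>
    pow_le_pow_left₀ (hposμ j) (hmonoμ hij) 2
  have hw1 : sμ ⟨r, hrm⟩ ^ 2 ≤ s0 ⟨r, hrm⟩ ^ 2 + μ * specNorm W ^ 2 :=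
    weyl_key S T U0 Uμ (fun i => s0 i ^ 2) (fun i => sμ i ^ 2) hU0 hUμ
      hsvd0 hsvdμ lam_mono nu_mono r hrm _ hqf1
  have hw2 : s0 ⟨r - 1, hr1m⟩ ^ 2 ≤ sμ ⟨r - 1, hr1m⟩ ^ 2 + 0 :=
    weyl_key T S Uμ U0 (fun i => sμ i ^ 2) (fun i => s0 i ^ 2) hUμ hU0
      hsvdμ hsvd0 nu_mono lam_mono (r - 1) hr1m 0 hqf2
  -- projections via diagonal indicator
  have hproj : ∀ Umat : Matrix (Fin m) (Fin m) ℝ,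
      (Umat.submatrix id (Fin.castLE hrm.le)) *
        (Umat.submatrix id (Fin.castLE hrm.le))ᵀ = Umat * J * Umatᵀ := by
    intro Umat
    ext a b
    have hR : (Umat * J * Umatᵀ) a b
        = ∑ i : Fin m, Umat a i * (if (i : ℕ) < r then (1 : ℝ) else 0) * Umat b i := by
      rw [Matrix.mul_apply]
      apply Finset.sum_congr rfl
      intro i _
      rw [Matrix.mul_diagonal, Matrix.transpose_apply]
    rw [hR, Matrix.mul_apply]
    have he : ∀ i : Fin m, Umat a i * (if (i : ℕ) < r then (1 : ℝ) else 0) * Umat b i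
        = if h : (i : ℕ) < r
          then Umat a (Fin.castLE hrm.le ⟨(i : ℕ), h⟩) *
            Umat b (Fin.castLE hrm.le ⟨(i : ℕ), h⟩) else 0 := by
      intro i
      by_cases h : (i : ℕ) < r
      · simp only [if_pos h, dif_pos h, mul_one]
        rfl
      · simp [h]
    rw [Finset.sum_congr rfl fun i _ => he i,
      sum_extend hrm.le
        (fun c => Umat a (Fin.castLE hrm.le c) * Umat b (Fin.castLE hrm.le c))]
    apply Finset.sum_congr rfl
    intro c _
    simp [Matrix.submatrix_apply, Matrix.transpose_apply]
  -- conjugation identities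
  have hconjPQ : U0ᵀ * (U0 * J * U0ᵀ - Uμ * J * Uμᵀ) * Uμ = J * Z - Z * J := by
    rw [Matrix.mul_sub, Matrix.sub_mul]
    congr 1
    · calc U0ᵀ * (U0 * J * U0ᵀ) * Uμ = ((U0ᵀ * U0) * J) * (U0ᵀ * Uμ) := by
            simp only [Matrix.mul_assoc]
        _ = J * Z := by rw [hU0, Matrix.one_mul]
    · calc U0ᵀ * (Uμ * J * Uμᵀ) * Uμ = ((U0ᵀ * Uμ) * J) * (Uμᵀ * Uμ) := by
            simp only [Matrix.mul_assoc]
        _ = Z * J := by rw [hUμ, Matrix.mul_one]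
  have hconjE : U0ᵀ * (T - S) * Uμ
      = Z * Matrix.diagonal (fun i => sμ i ^ 2)
        - Matrix.diagonal (fun i => s0 i ^ 2) * Z := by
    rw [Matrix.mul_sub, Matrix.sub_mul]
    congr 1
    · rw [hsvdμ]
      calc U0ᵀ * (Uμ * Matrix.diagonal (fun i => sμ i ^ 2) * Uμᵀ) * Uμ
          = ((U0ᵀ * Uμ) * Matrix.diagonal (fun i => sμ i ^ 2)) * (Uμᵀ * Uμ) := by
            simp only [Matrix.mul_assoc]
        _ = Z * Matrix.diagonal (fun i => sμ i ^ 2) := by rw [hUμ, Matrix.mul_one]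
    · rw [hsvd0]
      calc U0ᵀ * (U0 * Matrix.diagonal (fun i => s0 i ^ 2) * U0ᵀ) * Uμ
          = ((U0ᵀ * U0) * Matrix.diagonal (fun i => s0 i ^ 2)) * (U0ᵀ * Uμ) := by
            simp only [Matrix.mul_assoc]
        _ = Matrix.diagonal (fun i => s0 i ^ 2) * Z := by rw [hU0, Matrix.one_mul]
  have hTS : T - S = μ • (W * Wᵀ) := by rw [hT]; abel
  have hfsqPQ : fsq (U0 * J * U0ᵀ - Uμ * J * Uμᵀ) = fsq (J * Z - Z * J) := by
    rw [← hconjPQ, fsq_conj U0 Uμ hU0' hUμ]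
  have hfsqE : fsq (Z * Matrix.diagonal (fun i => sμ i ^ 2)
      - Matrix.diagonal (fun i => s0 i ^ 2) * Z) = μ ^ 2 * fsq (W * Wᵀ) := by
    rw [← hconjE, fsq_conj U0 Uμ hU0' hUμ, hTS, fsq_smul]
  set R0 : ℝ := 2 * specNorm W ^ 2 * frobNorm W / δ * μ with hR0
  have hR0nonneg : 0 ≤ R0 := by
    rw [hR0]
    apply mul_nonneg _ hμ
    apply div_nonneg _ (le_of_lt hδpos)
    have h1 := specNorm_nonneg W
    have h2 := frobNorm_nonneg W
    positivity
  have hC1 : (1 : ℝ) ≤ C := by linarith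
  have htarget : (2 * specNorm W ^ 2 * frobNorm W * C / δ) * μ = R0 * C := by
    rw [hR0]; ring
  rw [hproj U0, hproj Uμ, htarget]
  by_cases hcase : μ * specNorm W ^ 2 ≤ δ / 2
  · -- good case
    have hpt : (δ / 2) ^ 2 * fsq (J * Z - Z * J)
        ≤ fsq (Z * Matrix.diagonal (fun i => sμ i ^ 2)
          - Matrix.diagonal (fun i => s0 i ^ 2) * Z) := by
      rw [show fsq (J * Z - Z * J) = ∑ i, ∑ j, (J * Z - Z * J) i j ^ 2 from rfl,
        show fsq (Z * Matrix.diagonal (fun i => sμ i ^ 2)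
          - Matrix.diagonal (fun i => s0 i ^ 2) * Z)
          = ∑ i, ∑ j, (Z * Matrix.diagonal (fun i => sμ i ^ 2)
            - Matrix.diagonal (fun i => s0 i ^ 2) * Z) i j ^ 2 from rfl,
        Finset.mul_sum]
      apply Finset.sum_le_sum
      intro i _
      rw [Finset.mul_sum]
      apply Finset.sum_le_sum
      intro j _
      have hL : (J * Z - Z * J) i j
          = ((if (i : ℕ) < r then (1 : ℝ) else 0)
            - (if (j : ℕ) < r then (1 : ℝ) else 0)) * Z i j := by
        rw [Matrix.sub_apply, hJ, Matrix.diagonal_mul, Matrix.mul_diagonal]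
        ring
      have hRR : (Z * Matrix.diagonal (fun i => sμ i ^ 2)
          - Matrix.diagonal (fun i => s0 i ^ 2) * Z) i j
          = (sμ j ^ 2 - s0 i ^ 2) * Z i j := by
        rw [Matrix.sub_apply, Matrix.diagonal_mul, Matrix.mul_diagonal]
        ring
      rw [hL, hRR, mul_pow, mul_pow]
      by_cases hi : (i : ℕ) < r <;> by_cases hj : (j : ℕ) < r
      · rw [if_pos hi, if_pos hj]
        calc (δ / 2) ^ 2 * (((1 : ℝ) - 1) ^ 2 * Z i j ^ 2) = 0 := by ring
          _ ≤ (sμ j ^ 2 - s0 i ^ 2) ^ 2 * Z i j ^ 2 := by positivity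
      · have h1 : s0 ⟨r - 1, hr1m⟩ ^ 2 ≤ s0 i ^ 2 :=
          lam_mono (show i ≤ ⟨r - 1, hr1m⟩ by
            rw [Fin.le_def]; show (i : ℕ) ≤ r - 1; omega)
        have h2 : sμ j ^ 2 ≤ sμ ⟨r, hrm⟩ ^ 2 :=
          nu_mono (show (⟨r, hrm⟩ : Fin m) ≤ j by
            rw [Fin.le_def]; show r ≤ (j : ℕ); omega)
        have h3 : δ / 2 ≤ s0 i ^ 2 - sμ j ^ 2 := by
          have hδeq : δ = s0 ⟨r - 1, hr1m⟩ ^ 2 - s0 ⟨r, hrm⟩ ^ 2 := hδ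
          linarith [hw1, hcase]
        have h4 : (δ / 2) ^ 2 ≤ (sμ j ^ 2 - s0 i ^ 2) ^ 2 := by nlinarith
        rw [if_pos hi, if_neg hj]
        calc (δ / 2) ^ 2 * (((1 : ℝ) - 0) ^ 2 * Z i j ^ 2)
            = (δ / 2) ^ 2 * Z i j ^ 2 := by ring
          _ ≤ (sμ j ^ 2 - s0 i ^ 2) ^ 2 * Z i j ^ 2 :=
              mul_le_mul_of_nonneg_right h4 (sq_nonneg _)
      · have h1 : s0 i ^ 2 ≤ s0 ⟨r, hrm⟩ ^ 2 :=
          lam_mono (show (⟨r, hrm⟩ : Fin m) ≤ i by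
            rw [Fin.le_def]; show r ≤ (i : ℕ); omega)
        have h2 : sμ ⟨r - 1, hr1m⟩ ^ 2 ≤ sμ j ^ 2 :=
          nu_mono (show j ≤ ⟨r - 1, hr1m⟩ by
            rw [Fin.le_def]; show (j : ℕ) ≤ r - 1; omega)
        have h3 : δ / 2 ≤ sμ j ^ 2 - s0 i ^ 2 := by
          have hδeq : δ = s0 ⟨r - 1, hr1m⟩ ^ 2 - s0 ⟨r, hrm⟩ ^ 2 := hδ
          linarith [hw2, hδpos]
        have h4 : (δ / 2) ^ 2 ≤ (sμ j ^ 2 - s0 i ^ 2) ^ 2 := by nlinarith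
        rw [if_neg hi, if_pos hj]
        calc (δ / 2) ^ 2 * (((0 : ℝ) - 1) ^ 2 * Z i j ^ 2)
            = (δ / 2) ^ 2 * Z i j ^ 2 := by ring
          _ ≤ (sμ j ^ 2 - s0 i ^ 2) ^ 2 * Z i j ^ 2 :=
              mul_le_mul_of_nonneg_right h4 (sq_nonneg _)
      · rw [if_neg hi, if_neg hj]
        calc (δ / 2) ^ 2 * (((0 : ℝ) - 0) ^ 2 * Z i j ^ 2) = 0 := by ring
          _ ≤ (sμ j ^ 2 - s0 i ^ 2) ^ 2 * Z i j ^ 2 := by positivity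
    -- assemble good case
    have e1 : fsq ((U0 * J * U0ᵀ - Uμ * J * Uμᵀ) * W)
        ≤ specNorm W ^ 2 * fsq (U0 * J * U0ᵀ - Uμ * J * Uμᵀ) :=
      fsq_mul_le _ W
    have e3 : fsq (W * Wᵀ) ≤ specNorm W ^ 2 * fsq W := by
      calc fsq (W * Wᵀ) ≤ specNorm Wᵀ ^ 2 * fsq W := fsq_mul_le W Wᵀ
        _ ≤ specNorm W ^ 2 * fsq W := by
            apply mul_le_mul_of_nonneg_right _ (fsq_nonneg W)
            exact pow_le_pow_left₀ (specNorm_nonneg _) (specNorm_transpose_le W) 2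
    have hfsqfinal : fsq ((U0 * J * U0ᵀ - Uμ * J * Uμᵀ) * W) ≤ R0 ^ 2 := by
      have hE2 : fsq (Z * Matrix.diagonal (fun i => sμ i ^ 2)
          - Matrix.diagonal (fun i => s0 i ^ 2) * Z)
          ≤ μ ^ 2 * (specNorm W ^ 2 * fsq W) := by
        rw [hfsqE]
        exact mul_le_mul_of_nonneg_left e3 (sq_nonneg μ)
      have hG : fsq (U0 * J * U0ᵀ - Uμ * J * Uμᵀ)
          ≤ 4 * (μ ^ 2 * (specNorm W ^ 2 * fsq W)) / δ ^ 2 := by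
        rw [le_div_iff₀ (by positivity : (0:ℝ) < δ ^ 2), hfsqPQ]
        calc fsq (J * Z - Z * J) * δ ^ 2
            = 4 * ((δ / 2) ^ 2 * fsq (J * Z - Z * J)) := by ring
          _ ≤ 4 * fsq (Z * Matrix.diagonal (fun i => sμ i ^ 2)
              - Matrix.diagonal (fun i => s0 i ^ 2) * Z) := by linarith [hpt]
          _ ≤ 4 * (μ ^ 2 * (specNorm W ^ 2 * fsq W)) := by linarith [hE2]
      have hR0sq : R0 ^ 2
          = specNorm W ^ 2 * (4 * (μ ^ 2 * (specNorm W ^ 2 * fsq W)) / δ ^ 2) := by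
        rw [hR0, ← frobNorm_sq W]
        field_simp
        ring
      rw [hR0sq]
      calc fsq ((U0 * J * U0ᵀ - Uμ * J * Uμᵀ) * W)
          ≤ specNorm W ^ 2 * fsq (U0 * J * U0ᵀ - Uμ * J * Uμᵀ) := e1
        _ ≤ specNorm W ^ 2 * (4 * (μ ^ 2 * (specNorm W ^ 2 * fsq W)) / δ ^ 2) :=
            mul_le_mul_of_nonneg_left hG (sq_nonneg _)
    have hfinal : frobNorm (U0 * J * U0ᵀ * W - Uμ * J * Uμᵀ * W) ≤ R0 := by
      have hsubmul : U0 * J * U0ᵀ * W - Uμ * J * Uμᵀ * W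
          = (U0 * J * U0ᵀ - Uμ * J * Uμᵀ) * W := by
        rw [Matrix.sub_mul]
      rw [hsubmul]
      exact frob_le_of_fsq_le hfsqfinal hR0nonneg
    calc frobNorm (U0 * J * U0ᵀ * W - Uμ * J * Uμᵀ * W) ≤ R0 := hfinal
      _ ≤ R0 * C := le_mul_of_one_le_right hR0nonneg hC1
  · -- bad case
    push_neg at hcase
    have hprojfsq : ∀ Umat : Matrix (Fin m) (Fin m) ℝ, Umatᵀ * Umat = 1 →
        fsq (Umat * J * Umatᵀ * W) ≤ fsq W := by
      intro Umat hO
      have hO' : Umat * Umatᵀ = 1 := mul_eq_one_comm.mp hO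
      rw [fsq_cols (Umat * J * Umatᵀ * W), fsq_cols W]
      apply Finset.sum_le_sum
      intro j _
      have hcol : (fun i => (Umat * J * Umatᵀ * W) i j)
          = (Umat * J * Umatᵀ).mulVec (fun i => W i j) := by
        funext i
        simp [Matrix.mul_apply, Matrix.mulVec, dotProduct]
      rw [hcol]
      have h1 : (Umat * J * Umatᵀ).mulVec (fun i => W i j)
          = Umat.mulVec (J.mulVec (Umatᵀ.mulVec (fun i => W i j))) := by
        rw [Matrix.mulVec_mulVec, Matrix.mulVec_mulVec]
      rw [h1, vsq_mulVec_orth Umat hO]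
      have h2 : vsq (J.mulVec (Umatᵀ.mulVec fun i => W i j))
          ≤ vsq (Umatᵀ.mulVec fun i => W i j) := by
        apply Finset.sum_le_sum
        intro i _
        rw [hJ, Matrix.mulVec_diagonal]
        by_cases h : (i : ℕ) < r <;> simp [h]
        positivity
      calc vsq (J.mulVec (Umatᵀ.mulVec fun i => W i j))
          ≤ vsq (Umatᵀ.mulVec fun i => W i j) := h2
        _ = vsq (fun i => W i j) := by
            apply vsq_mulVec_orth
            rw [Matrix.transpose_transpose]
            exact hO'
    have htri : frobNorm (U0 * J * U0ᵀ * W - Uμ * J * Uμᵀ * W)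
        ≤ 2 * frobNorm W := by
      calc frobNorm (U0 * J * U0ᵀ * W - Uμ * J * Uμᵀ * W)
          ≤ frobNorm (U0 * J * U0ᵀ * W) + frobNorm (Uμ * J * Uμᵀ * W) :=
            frob_triangle_sub _ _
        _ ≤ frobNorm W + frobNorm W :=
            add_le_add (frob_mono (hprojfsq U0 hU0)) (frob_mono (hprojfsq Uμ hUμ))
        _ = 2 * frobNorm W := by ring
    have hfrR0 : frobNorm W ≤ R0 := by
      have h1 : (1 : ℝ) ≤ 2 * μ * specNorm W ^ 2 / δ := by
        rw [le_div_iff₀ hδpos]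
        linarith
      calc frobNorm W = frobNorm W * 1 := by ring
        _ ≤ frobNorm W * (2 * μ * specNorm W ^ 2 / δ) :=
            mul_le_mul_of_nonneg_left h1 (frobNorm_nonneg W)
        _ = R0 := by rw [hR0]; ring
    calc frobNorm (U0 * J * U0ᵀ * W - Uμ * J * Uμᵀ * W)
        ≤ 2 * frobNorm W := htri
      _ ≤ 2 * R0 := by linarith
      _ = R0 * 2 := by ring
      _ ≤ R0 * C := mul_le_mul_of_nonneg_left hC2 hR0nonneg

end Stmt16

open Stmt16 in
set_option maxHeartbeats 1000000 in
/-- degenerate-case convergence bound: With `rank X = k ≥ r`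
and `σ_r(WX) ≠ σ_{r+1}(WX)`, for `W₀ = U_rU_rᵀW` (`U_r` the first `r` left
singular vectors of `WX`) and `W_μ` built from the first `r` left singular
vectors of `W(XXᵀ + μI)^{1/2}`,
`‖W₀ − W_μ‖_F ≤ (2‖W‖₂²‖W‖_F (σ₁(X)/σ_k(X) + max(1, μ/(4σ_k(X)²))) /
(σ_r(WX)² − σ_{r+1}(WX)²)) · μ`. -/
theorem stmt16 {m n k : ℕ} (r : ℕ) (hr1 : 1 ≤ r) (hrk : r ≤ k) (hrm : r < m)
    (μ : ℝ) (hμ : 0 ≤ μ)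
    (W : Matrix (Fin m) (Fin n) ℝ) (X : Matrix (Fin n) (Fin k) ℝ)
    (hrank : X.rank = k)
    (h2 : (X * Xᵀ + μ • (1 : Matrix (Fin n) (Fin n) ℝ)).PosSemidef)
    -- singular values of X (sorted), via a spectral decomposition of XᵀX
    (Px : Matrix (Fin k) (Fin k) ℝ) (sx : Fin k → ℝ) (hPx : Pxᵀ * Px = 1)
    (hspecx : Xᵀ * X = Px * Matrix.diagonal (fun i => (sx i) ^ 2) * Pxᵀ)
    (hmonox : Antitone sx) (hposx : ∀ i, 0 ≤ sx i)
    -- left singular vectors / singular values of WX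
    (U0 : Matrix (Fin m) (Fin m) ℝ) (s0 : Fin m → ℝ) (hU0 : U0ᵀ * U0 = 1)
    (hsvd0 : (W * X) * (W * X)ᵀ =
      U0 * Matrix.diagonal (fun i => (s0 i) ^ 2) * U0ᵀ)
    (hmono0 : Antitone s0) (hpos0 : ∀ i, 0 ≤ s0 i)
    -- left singular vectors of W(XXᵀ + μI)^{1/2}
    (Uμ : Matrix (Fin m) (Fin m) ℝ) (sμ : Fin m → ℝ) (hUμ : Uμᵀ * Uμ = 1)
    (hsvdμ : (W * h2.sqrt) * (W * h2.sqrt)ᵀ =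
      Uμ * Matrix.diagonal (fun i => (sμ i) ^ 2) * Uμᵀ)
    (hmonoμ : Antitone sμ) (hposμ : ∀ i, 0 ≤ sμ i)
    (hgap : s0 ⟨r - 1, by omega⟩ ≠ s0 ⟨r, hrm⟩)
    (Ur0 Urμ : Matrix (Fin m) (Fin r) ℝ)
    (hUr0 : Ur0 = U0.submatrix id (Fin.castLE hrm.le))
    (hUrμ : Urμ = Uμ.submatrix id (Fin.castLE hrm.le)) :
    frobNorm (Ur0 * Ur0ᵀ * W - Urμ * Urμᵀ * W) ≤
      (2 * specNorm W ^ 2 * frobNorm W *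
          (sx ⟨0, by omega⟩ / sx ⟨k - 1, by omega⟩ +
            max 1 (μ / (4 * sx ⟨k - 1, by omega⟩ ^ 2))) /
        (s0 ⟨r - 1, by omega⟩ ^ 2 - s0 ⟨r, hrm⟩ ^ 2)) * μ := by
  have hk0 : 0 < k := lt_of_lt_of_le hr1 hrk
  have hkk : k - 1 < k := by omega
  have hr1m : r - 1 < m := by omega
  -- T = S + μ W Wᵀ
  have hherm : h2.sqrtᵀ = h2.sqrt := by
    simp only [Matrix.PosSemidef.sqrt, Matrix.transpose_mul, Matrix.diagonal_transpose,
      Matrix.star_eq_conjTranspose, Matrix.conjTranspose_eq_transpose_of_trivial,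
      Matrix.transpose_transpose, Matrix.mul_assoc]
  have hsqrt : h2.sqrt * h2.sqrt = X * Xᵀ + μ • 1 := by
    have hUU : (star h2.1.eigenvectorUnitary.1) * h2.1.eigenvectorUnitary.1 = 1 :=
      Unitary.coe_star_mul_self _
    have hD : diagonal ((↑) ∘ (√·) ∘ h2.1.eigenvalues) *
        diagonal ((↑) ∘ (√·) ∘ h2.1.eigenvalues)
        = diagonal (RCLike.ofReal ∘ h2.1.eigenvalues : Fin n → ℝ) := by
      rw [diagonal_mul_diagonal]; congr 1; funext i
      simp [Real.mul_self_sqrt (h2.eigenvalues_nonneg i)]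
    conv_rhs => rw [h2.1.spectral_theorem, Unitary.conjStarAlgAut_apply]
    simp only [Matrix.PosSemidef.sqrt]
    rw [← hD]
    calc _ = h2.1.eigenvectorUnitary.1 * diagonal ((↑) ∘ (√·) ∘ h2.1.eigenvalues) *
        ((star h2.1.eigenvectorUnitary.1) * h2.1.eigenvectorUnitary.1) *
        diagonal ((↑) ∘ (√·) ∘ h2.1.eigenvalues) * star h2.1.eigenvectorUnitary.1 := by
          simp only [Matrix.mul_assoc]; rfl
      _ = _ := by rw [hUU, Matrix.mul_one]; simp only [Matrix.mul_assoc]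
  have hT : (W * h2.sqrt) * (W * h2.sqrt)ᵀ
      = (W * X) * (W * X)ᵀ + μ • (W * Wᵀ) := by
    rw [Matrix.transpose_mul, Matrix.transpose_mul, hherm]
    calc W * h2.sqrt * (h2.sqrt * Wᵀ) = W * (h2.sqrt * h2.sqrt) * Wᵀ := by
          simp only [Matrix.mul_assoc]
      _ = W * (X * Xᵀ + μ • 1) * Wᵀ := by rw [hsqrt]
      _ = W * X * (Xᵀ * Wᵀ) + μ • (W * Wᵀ) := by
          rw [Matrix.mul_add, Matrix.add_mul]
          congr 1
          · simp only [Matrix.mul_assoc]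
          · rw [Matrix.mul_smul, Matrix.mul_one, Matrix.smul_mul]
  -- gap strict
  have hab : s0 ⟨r, hrm⟩ ≤ s0 ⟨r - 1, hr1m⟩ :=
    hmono0 (by rw [Fin.le_def]; show r - 1 ≤ r; omega)
  have hgap' : s0 ⟨r, hrm⟩ < s0 ⟨r - 1, hr1m⟩ :=
    lt_of_le_of_ne hab fun h => hgap h.symm
  -- constant C ≥ 2
  have hsxpos : 0 < sx ⟨k - 1, hkk⟩ := sx_last_pos X hrank Px sx hPx hspecx hposx hkk
  have hsx01 : sx ⟨k - 1, hkk⟩ ≤ sx ⟨0, hk0⟩ :=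
    hmonox (by rw [Fin.le_def]; show 0 ≤ k - 1; omega)
  have hC2 : (2 : ℝ) ≤ sx ⟨0, hk0⟩ / sx ⟨k - 1, hkk⟩
      + max 1 (μ / (4 * sx ⟨k - 1, hkk⟩ ^ 2)) := by
    have ha : (1 : ℝ) ≤ sx ⟨0, hk0⟩ / sx ⟨k - 1, hkk⟩ :=
      (one_le_div hsxpos).mpr hsx01
    have hb : (1 : ℝ) ≤ max 1 (μ / (4 * sx ⟨k - 1, hkk⟩ ^ 2)) := le_max_left _ _
    linarith
  rw [hUr0, hUrμ]
  exact Stmt16.core r hr1 hrm hr1m μ hμ W ((W * X) * (W * X)ᵀ)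
    ((W * h2.sqrt) * (W * h2.sqrt)ᵀ) hT U0 s0 hU0 hsvd0 hmono0 hpos0
    Uμ sμ hUμ hsvdμ hmonoμ hposμ hgap' _ hC2
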